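/- Let f : ℝ → ℝ be a continuous function satisfying f(x + π) = f(x) and f(π − x) = f(x) for all x ≥ 0, such that the improper integral I = ∫₀^∞ (sin x / x) f(x) dx exists. Then I = ∫₀^{π/2} sin t · (1/t + Σ_{μ=1}^∞ (−1)^μ (1/(t + μπ) + 1/(t − μπ))) f(t) dt, where the series inside the integral converges for every t ∈ (0, π/2]. -/

import Mathlib

open Real Filter MeasureTheory intervalIntegral

noncomputable def paf (t : ℝ) (μ : ℕ) : ℝ :=
  (-1 : ℝ) ^ (μ + 1) * (1 / (t + ((μ : ℝ) + 1) * π) + 1 / (t - ((μ : ℝ) + 1) * π))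

lemma paf_abs {t : ℝ} (h0 : 0 ≤ t) (h1 : t ≤ π / 2) (μ : ℕ) :
    |paf t μ| ≤ 2 / π * (1 / ((μ : ℝ) + 1) ^ 2) := by
  have hπ := pi_pos
  set m : ℝ := (μ : ℝ) + 1 with hm
  have hm0 : (0:ℝ) ≤ (μ : ℝ) := Nat.cast_nonneg μ
  have hm1 : 1 ≤ m := by rw [hm]; linarith
  have hd1 : 0 < t + m * π := by nlinarith
  have hd2 : 0 < m * π - t := by nlinarith
  have key : 1 / (t + m * π) + 1 / (t - m * π)
      = -(2 * t / ((t + m * π) * (m * π - t))) := by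
    have h2' : t - m * π ≠ 0 := by intro h; nlinarith [h]
    field_simp
    ring
  rw [paf, ← hm, key, abs_mul, abs_pow, abs_neg, abs_one, one_pow, one_mul, abs_neg,
    abs_div]
  rw [abs_of_nonneg (by positivity : (0:ℝ) ≤ 2 * t),
    abs_of_nonneg (by positivity : (0:ℝ) ≤ (t + m * π) * (m * π - t))]
  rw [div_le_iff₀ (by positivity)]
  have key2 : 2 / π * (1 / m ^ 2) * ((t + m * π) * (m * π - t))
      = 2 * ((t + m * π) * (m * π - t)) / (π * m ^ 2) := by
    field_simp
  rw [key2, le_div_iff₀ (by positivity)]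
  have h3 : t * (π * m ^ 2) ≤ π / 2 * (π * m ^ 2) :=
    mul_le_mul_of_nonneg_right h1 (by positivity)
  have h4 : t ^ 2 ≤ (π / 2) ^ 2 := by nlinarith
  have h5 : π ^ 2 * 1 ≤ π ^ 2 * m ^ 2 := by
    apply mul_le_mul_of_nonneg_left _ (by positivity)
    nlinarith
  nlinarith [h3, h4, h5]

lemma c_summable : Summable (fun μ : ℕ => 2 / π * (1 / ((μ : ℝ) + 1) ^ 2)) := by
  apply Summable.mul_left
  have : Summable (fun n : ℕ => 1 / (n : ℝ) ^ 2) :=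
    Real.summable_one_div_nat_pow.mpr (by norm_num)
  have := (summable_nat_add_iff 1).mpr this
  simpa using this

lemma paf_summable {t : ℝ} (h0 : 0 ≤ t) (h1 : t ≤ π / 2) :
    Summable (fun μ : ℕ => paf t μ) := by
  apply Summable.of_abs
  exact c_summable.of_nonneg_of_le (fun μ => abs_nonneg _) (fun μ => paf_abs h0 h1 μ)

lemma Ssum (t : ℝ) (N : ℕ) :
    ∑ k ∈ Finset.range (N + 1),
      (-1 : ℝ) ^ k * (1 / (t + (k : ℝ) * π) + 1 / (((k : ℝ) + 1) * π - t))
    = 1 / t + (∑ μ ∈ Finset.range N, paf t μ)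
      + (-1 : ℝ) ^ (N + 1) * (1 / (t - ((N : ℝ) + 1) * π)) := by
  induction N with
  | zero =>
      simp only [Finset.sum_range_succ, Finset.sum_range_zero]
      push_cast
      rw [show ((0:ℝ) + 1) * π - t = -(t - ((0:ℝ) + 1) * π) by ring, div_neg]
      ring
  | succ n ih =>
      rw [Finset.sum_range_succ, ih, Finset.sum_range_succ, paf]
      push_cast
      rw [show ((n:ℝ) + 1 + 1) * π - t = -(t - ((n:ℝ) + 1 + 1) * π) by ring, div_neg]
      ring

lemma abs_sin_div_le (x : ℝ) : |Real.sin x / x| ≤ 1 := by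
  rcases eq_or_ne x 0 with h | h
  · simp [h]
  · rw [abs_div]
    exact div_le_one_of_le₀ abs_sin_le_abs (abs_nonneg x)

lemma abs_sin_div_add_le {c x : ℝ} (hc : 0 ≤ c) (h0 : 0 ≤ x) (hπ : x ≤ π) :
    |Real.sin x / (x + c)| ≤ 1 := by
  rcases eq_or_lt_of_le (by linarith : (0:ℝ) ≤ x + c) with h | h
  · simp [← h]
  · rw [abs_div, abs_of_pos h,
      abs_of_nonneg (Real.sin_nonneg_of_nonneg_of_le_pi h0 hπ)]
    apply div_le_one_of_le₀ _ h.le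
    have h1 : Real.sin x ≤ |Real.sin x| := le_abs_self _
    have h2 : |Real.sin x| ≤ |x| := abs_sin_le_abs
    rw [abs_of_nonneg h0] at h2
    linarith

lemma intg_bdd {g : ℝ → ℝ} {a b : ℝ}
    (hm : AEStronglyMeasurable g (volume.restrict (Set.uIoc a b))) (C : ℝ)
    (hC : ∀ x ∈ Set.uIoc a b, |g x| ≤ C) : IntervalIntegrable g volume a b := by
  apply (_root_.intervalIntegrable_const (c := C)).mono_fun hm
  filter_upwards [ae_restrict_mem measurableSet_uIoc] with x hx
  have : |g x| ≤ C := hC x hx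
  have h2 : C ≤ |C| := le_abs_self _
  simpa [Real.norm_eq_abs] using this.trans h2

lemma intg_main {f : ℝ → ℝ} (hf : Continuous f) (a b : ℝ) :
    IntervalIntegrable (fun x => Real.sin x / x * f x) volume a b := by
  obtain ⟨C, hC⟩ : ∃ C, ∀ x ∈ Set.uIcc a b, ‖f x‖ ≤ C :=
    isCompact_uIcc.exists_bound_of_continuousOn hf.continuousOn
  apply intg_bdd ((Real.measurable_sin.div measurable_id).mul
    hf.measurable).aestronglyMeasurable C
  intro x hx
  have hx' : x ∈ Set.uIcc a b := Set.uIoc_subset_uIcc hx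
  have := hC x hx'
  rw [Real.norm_eq_abs] at this
  calc |Real.sin x / x * f x| = |Real.sin x / x| * |f x| := abs_mul _ _
    _ ≤ 1 * C := mul_le_mul (abs_sin_div_le x) this (abs_nonneg _)
        (by norm_num)
    _ = C := one_mul C

lemma intg_shift {f : ℝ → ℝ} (hf : Continuous f) {c : ℝ} (hc : 0 ≤ c) {a b : ℝ}
    (hab : Set.uIcc a b ⊆ Set.Icc 0 π) :
    IntervalIntegrable (fun t => Real.sin t / (t + c) * f t) volume a b := by
  obtain ⟨C, hC⟩ : ∃ C, ∀ x ∈ Set.uIcc a b, ‖f x‖ ≤ C :=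
    isCompact_uIcc.exists_bound_of_continuousOn hf.continuousOn
  apply intg_bdd ((Real.measurable_sin.div
    (measurable_id.add measurable_const)).mul hf.measurable).aestronglyMeasurable C
  intro x hx
  have hx' : x ∈ Set.uIcc a b := Set.uIoc_subset_uIcc hx
  have hx'' := hab hx'
  have := hC x hx'
  rw [Real.norm_eq_abs] at this
  calc |Real.sin x / (x + c) * f x| = |Real.sin x / (x + c)| * |f x| := abs_mul _ _
    _ ≤ 1 * C := mul_le_mul (abs_sin_div_add_le hc hx''.1 hx''.2) this (abs_nonneg _)
        (by norm_num)
    _ = C := one_mul C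

lemma intg_pole {f : ℝ → ℝ} (hf : Continuous f) {d : ℝ} (hd : π / 2 < d) :
    IntervalIntegrable (fun t => Real.sin t / (t - d) * f t) volume 0 (π / 2) := by
  apply ContinuousOn.intervalIntegrable
  apply ContinuousOn.mul _ hf.continuousOn
  apply Real.continuous_sin.continuousOn.div
    (continuous_id.sub continuous_const).continuousOn
  intro x hx
  rw [Set.uIcc_of_le (by positivity)] at hx
  have : x ≤ π / 2 := hx.2
  intro h
  change x - d = 0 at h
  have : x = d := by linarith [sub_eq_zero.mp h]
  linarith [this ▸ hx.2]

lemma paf_continuousOn (μ : ℕ) :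
    ContinuousOn (fun t => paf t μ) (Set.Icc 0 (π / 2)) := by
  have hπ := pi_pos
  unfold paf
  apply ContinuousOn.mul continuousOn_const
  apply ContinuousOn.add
  · apply ContinuousOn.div continuousOn_const
      (continuous_id.add continuous_const).continuousOn
    intro x hx
    have h1 : (0:ℝ) ≤ (μ : ℝ) := Nat.cast_nonneg μ
    have := hx.1
    show x + ((μ:ℝ)+1)*π ≠ 0
    positivity
  · apply ContinuousOn.div continuousOn_const
      (continuous_id.sub continuous_const).continuousOn
    intro x hx
    have h1 : (0:ℝ) ≤ (μ : ℝ) := Nat.cast_nonneg μ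
    have h2 : π ≤ ((μ:ℝ) + 1) * π := by nlinarith
    have := hx.2
    intro h
    change x - ((μ:ℝ)+1)*π = 0 at h
    nlinarith [sub_eq_zero.mp h]

lemma tsum_paf_continuousOn :
    ContinuousOn (fun t => ∑' μ, paf t μ) (Set.Icc 0 (π / 2)) := by
  rw [continuousOn_iff_continuous_restrict]
  apply continuous_tsum (u := fun μ : ℕ => 2 / π * (1 / ((μ : ℝ) + 1) ^ 2))
  · intro μ
    exact continuousOn_iff_continuous_restrict.mp (paf_continuousOn μ)
  · exact c_summable
  · intro μ x
    simpa [Real.norm_eq_abs] using paf_abs x.2.1 x.2.2 μ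

lemma fper {f : ℝ → ℝ} (hper : ∀ x : ℝ, 0 ≤ x → f (x + π) = f x) :
    ∀ (t : ℝ), 0 ≤ t → ∀ k : ℕ, f (t + (k : ℝ) * π) = f t := by
  intro t ht k
  induction k with
  | zero => simp
  | succ n ih =>
      have h1 : t + ((n : ℕ) + 1 : ℕ) * π = (t + (n : ℝ) * π) + π := by push_cast; ring
      have h2 : 0 ≤ t + (n : ℝ) * π := by positivity
      rw [h1, hper _ h2, ih]

lemma half_period {f : ℝ → ℝ} (hper : ∀ x : ℝ, 0 ≤ x → f (x + π) = f x) (k : ℕ) :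
    ∫ x in ((k : ℝ) * π)..(((k : ℝ) + 1) * π), Real.sin x / x * f x
      = (-1 : ℝ) ^ k * ∫ t in (0:ℝ)..π, Real.sin t / (t + (k : ℝ) * π) * f t := by
  have h1 : ((k : ℝ) * π) = 0 + (k : ℝ) * π := by ring
  have h2 : (((k : ℝ) + 1) * π) = π + (k : ℝ) * π := by ring
  rw [h1, h2, ← intervalIntegral.integral_comp_add_right (a := 0) (b := π)
    (fun x => Real.sin x / x * f x) ((k : ℝ) * π)]
  rw [← intervalIntegral.integral_const_mul]
  apply intervalIntegral.integral_congr
  intro t ht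
  rw [Set.uIcc_of_le pi_pos.le] at ht
  simp only []
  rw [Real.sin_add_nat_mul_pi, fper hper t ht.1 k]
  ring

lemma reflect {f : ℝ → ℝ} (hsym : ∀ x : ℝ, 0 ≤ x → f (π - x) = f x) (k : ℕ) :
    ∫ t in (π/2)..π, Real.sin t / (t + (k : ℝ) * π) * f t
      = ∫ s in (0:ℝ)..(π/2), Real.sin s / (((k : ℝ) + 1) * π - s) * f s := by
  have key := intervalIntegral.integral_comp_sub_left (a := 0) (b := π/2)
    (fun x => Real.sin x / (x + (k : ℝ) * π) * f x) π
  rw [sub_zero, show π - π/2 = π/2 by ring] at key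
  rw [← key]
  apply intervalIntegral.integral_congr
  intro s hs
  rw [Set.uIcc_of_le (by positivity)] at hs
  simp only []
  rw [Real.sin_pi_sub, hsym s hs.1,
    show π - s + (k : ℝ) * π = ((k : ℝ) + 1) * π - s by ring]

lemma intg_pole' {f : ℝ → ℝ} (hf : Continuous f) {d : ℝ} (hd : π / 2 < d) :
    IntervalIntegrable (fun t => Real.sin t / (d - t) * f t) volume 0 (π / 2) := by
  have h : (fun t => Real.sin t / (d - t) * f t)
      = (fun t => -(Real.sin t / (t - d) * f t)) := by
    funext t
    rw [show d - t = -(t - d) by ring, div_neg]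
    ring
  rw [h]
  exact (intg_pole hf hd).neg

lemma full_period {f : ℝ → ℝ} (hf : Continuous f)
    (hsym : ∀ x : ℝ, 0 ≤ x → f (π - x) = f x) (k : ℕ) :
    ∫ t in (0:ℝ)..π, Real.sin t / (t + (k : ℝ) * π) * f t
      = ∫ t in (0:ℝ)..(π/2), (Real.sin t / (t + (k : ℝ) * π) * f t
          + Real.sin t / (((k : ℝ) + 1) * π - t) * f t) := by
  have hπ := pi_pos
  have hkπ : (0:ℝ) ≤ (k : ℝ) * π := by positivity
  have hsub1 : Set.uIcc (0:ℝ) (π/2) ⊆ Set.Icc 0 π := by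
    rw [Set.uIcc_of_le (by positivity)]
    exact Set.Icc_subset_Icc le_rfl (by linarith)
  have hsub2 : Set.uIcc (π/2) π ⊆ Set.Icc 0 π := by
    rw [Set.uIcc_of_le (by linarith)]
    exact Set.Icc_subset_Icc (by linarith) le_rfl
  have i1 := intg_shift hf hkπ hsub1
  have i2 := intg_shift hf hkπ hsub2
  have hd : π / 2 < ((k : ℝ) + 1) * π := by
    have h0 : (0:ℝ) ≤ (k : ℝ) := Nat.cast_nonneg k
    nlinarith
  have i3 := intg_pole' hf hd
  rw [← intervalIntegral.integral_add_adjacent_intervals i1 i2, reflect hsym k,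
    ← intervalIntegral.integral_add i1 i3]

lemma FNpi_eq {f : ℝ → ℝ} (hf : Continuous f)
    (hper : ∀ x : ℝ, 0 ≤ x → f (x + π) = f x)
    (hsym : ∀ x : ℝ, 0 ≤ x → f (π - x) = f x) (N : ℕ) :
    ∫ x in (0:ℝ)..(((N : ℝ) + 1) * π), Real.sin x / x * f x
      = (∫ t in (0:ℝ)..(π/2), Real.sin t / t * f t)
        + (∫ t in (0:ℝ)..(π/2), Real.sin t * (∑ μ ∈ Finset.range N, paf t μ) * f t)
        + (-1 : ℝ) ^ (N + 1) *
          ∫ t in (0:ℝ)..(π/2), Real.sin t / (t - ((N : ℝ) + 1) * π) * f t := by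
  have hπ := pi_pos
  have hsub1 : Set.uIcc (0:ℝ) (π/2) ⊆ Set.Icc 0 π := by
    rw [Set.uIcc_of_le (by positivity)]
    exact Set.Icc_subset_Icc le_rfl (by linarith)
  have hdk : ∀ k : ℕ, π / 2 < ((k : ℝ) + 1) * π := by
    intro k
    have h0 : (0:ℝ) ≤ (k : ℝ) := Nat.cast_nonneg k
    nlinarith
  have ia := intg_main hf 0 (π/2)
  have ib : IntervalIntegrable
      (fun t => Real.sin t * (∑ μ ∈ Finset.range N, paf t μ) * f t) volume 0 (π/2) := by
    apply ContinuousOn.intervalIntegrable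
    rw [Set.uIcc_of_le (by positivity)]
    exact (Real.continuous_sin.continuousOn.mul
      (continuousOn_finset_sum _ (fun μ _ => paf_continuousOn μ))).mul hf.continuousOn
  have ic := intg_pole hf (hdk N)
  have hAi : ∀ k : ℕ, IntervalIntegrable
      (fun t => Real.sin t / (t + (k : ℝ) * π) * f t) volume 0 (π/2) :=
    fun k => intg_shift hf (by positivity) hsub1
  have hBi : ∀ k : ℕ, IntervalIntegrable
      (fun t => Real.sin t / (((k : ℝ) + 1) * π - t) * f t) volume 0 (π/2) :=
    fun k => intg_pole' hf (hdk k)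
  have adj : ∀ k < N + 1, IntervalIntegrable (fun x => Real.sin x / x * f x)
      volume ((fun k : ℕ => (k : ℝ) * π) k) ((fun k : ℕ => (k : ℝ) * π) (k + 1)) :=
    fun k _ => intg_main hf _ _
  have step1 := intervalIntegral.sum_integral_adjacent_intervals adj
  simp only [Nat.cast_zero, zero_mul, Nat.cast_add, Nat.cast_one] at step1
  rw [← step1]
  have step2 : ∀ k ∈ Finset.range (N + 1),
      (∫ x in ((k : ℝ) * π)..(((k : ℝ) + 1) * π), Real.sin x / x * f x)
      = ∫ t in (0:ℝ)..(π/2), (-1 : ℝ) ^ k * (Real.sin t / (t + (k : ℝ) * π) * f t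
          + Real.sin t / (((k : ℝ) + 1) * π - t) * f t) := by
    intro k _
    rw [half_period hper k, full_period hf hsym k, intervalIntegral.integral_const_mul]
  rw [Finset.sum_congr rfl step2,
    ← intervalIntegral.integral_finset_sum
      (fun k _ => ((hAi k).add (hBi k)).const_mul ((-1:ℝ)^k)),
    ← intervalIntegral.integral_const_mul,
    ← intervalIntegral.integral_add ia ib,
    ← intervalIntegral.integral_add (ia.add ib) (ic.const_mul _)]
  apply intervalIntegral.integral_congr
  intro t _
  simp only []
  have e1 : ∀ k ∈ Finset.range (N + 1),
      (-1 : ℝ) ^ k * (Real.sin t / (t + (k : ℝ) * π) * f t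
        + Real.sin t / (((k : ℝ) + 1) * π - t) * f t)
      = (Real.sin t * f t) * ((-1 : ℝ) ^ k *
          (1 / (t + (k : ℝ) * π) + 1 / (((k : ℝ) + 1) * π - t))) := by
    intro k _
    ring
  rw [Finset.sum_congr rfl e1, ← Finset.mul_sum, Ssum t N]
  ring

lemma half_summable (t : ℝ) (h0 : 0 ≤ t) (h1 : t ≤ π / 2) (N : ℕ) :
    Summable (fun k : ℕ => |paf t (k + N)|) := by
  apply Summable.of_nonneg_of_le (fun k => abs_nonneg _)
    (fun k => paf_abs h0 h1 (k + N))
  exact ((summable_nat_add_iff N).mpr c_summable)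

lemma tail_bound (t : ℝ) (h0 : 0 ≤ t) (h1 : t ≤ π / 2) (N : ℕ) :
    |(∑' μ, paf t μ) - ∑ μ ∈ Finset.range N, paf t μ|
      ≤ ∑' k : ℕ, 2 / π * (1 / (((k : ℝ) + N) + 1) ^ 2) := by
  have hs := paf_summable h0 h1
  have key := Summable.sum_add_tsum_nat_add N hs
  have : (∑' μ, paf t μ) - ∑ μ ∈ Finset.range N, paf t μ = ∑' k, paf t (k + N) := by
    rw [← key]; ring
  rw [this]
  have hsum : Summable (fun k : ℕ => ‖paf t (k + N)‖) := by
    simp only [Real.norm_eq_abs]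
    exact half_summable t h0 h1 N
  calc |∑' k, paf t (k + N)| ≤ ∑' k, |paf t (k + N)| := by
        have h := norm_tsum_le_tsum_norm hsum
        simp only [Real.norm_eq_abs] at h
        exact h
    _ ≤ ∑' k : ℕ, 2 / π * (1 / (((k : ℝ) + N) + 1) ^ 2) := by
        apply Summable.tsum_le_tsum _ (half_summable t h0 h1 N)
          (by simpa using (summable_nat_add_iff N).mpr c_summable)
        intro k
        simpa [add_comm, add_assoc, add_left_comm] using paf_abs h0 h1 (k + N)

lemma Jsum_tendsto {f : ℝ → ℝ} (hf : Continuous f) :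
    Tendsto (fun N : ℕ =>
        ∫ t in (0:ℝ)..(π/2), Real.sin t * (∑ μ ∈ Finset.range N, paf t μ) * f t)
      atTop
      (nhds (∫ t in (0:ℝ)..(π/2), Real.sin t * (∑' μ, paf t μ) * f t)) := by
  have hπ := pi_pos
  obtain ⟨C, hC⟩ : ∃ C, ∀ x ∈ Set.Icc (0:ℝ) (π/2), ‖f x‖ ≤ C :=
    isCompact_Icc.exists_bound_of_continuousOn hf.continuousOn
  have hC0 : 0 ≤ C := le_trans (norm_nonneg _) (hC 0 (by constructor <;> [rfl; positivity]))
  have iJ : IntervalIntegrable (fun t => Real.sin t * (∑' μ, paf t μ) * f t)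
      volume 0 (π/2) := by
    apply ContinuousOn.intervalIntegrable
    rw [Set.uIcc_of_le (by positivity)]
    exact (Real.continuous_sin.continuousOn.mul tsum_paf_continuousOn).mul hf.continuousOn
  have ibn : ∀ N : ℕ, IntervalIntegrable
      (fun t => Real.sin t * (∑ μ ∈ Finset.range N, paf t μ) * f t) volume 0 (π/2) := by
    intro N
    apply ContinuousOn.intervalIntegrable
    rw [Set.uIcc_of_le (by positivity)]
    exact (Real.continuous_sin.continuousOn.mul
      (continuousOn_finset_sum _ (fun μ _ => paf_continuousOn μ))).mul hf.continuousOn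
  set r : ℕ → ℝ := fun N => ∑' k : ℕ, 2 / π * (1 / (((k : ℝ) + N) + 1) ^ 2) with hr
  have hr0 : Tendsto r atTop (nhds 0) := by
    have := tendsto_sum_nat_add (f := fun μ : ℕ => 2 / π * (1 / ((μ : ℝ) + 1) ^ 2))
    apply this.congr
    intro N
    apply tsum_congr
    intro k
    push_cast
    ring_nf
  have hrnn : ∀ N, 0 ≤ r N := by
    intro N
    apply tsum_nonneg
    intro k
    positivity
  rw [tendsto_iff_norm_sub_tendsto_zero]
  apply squeeze_zero (fun N => norm_nonneg _) _ (by
    have : Tendsto (fun N : ℕ => C * r N * (π/2)) atTop (nhds (C * 0 * (π/2))) :=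
      ((tendsto_const_nhds.mul hr0).mul tendsto_const_nhds)
    simpa using this)
  intro N
  have diff_eq : (∫ t in (0:ℝ)..(π/2), Real.sin t * (∑ μ ∈ Finset.range N, paf t μ) * f t)
      - (∫ t in (0:ℝ)..(π/2), Real.sin t * (∑' μ, paf t μ) * f t)
      = ∫ t in (0:ℝ)..(π/2), Real.sin t *
          ((∑ μ ∈ Finset.range N, paf t μ) - ∑' μ, paf t μ) * f t := by
    rw [← intervalIntegral.integral_sub (ibn N) iJ]
    apply intervalIntegral.integral_congr
    intro t _
    simp only []
    ring
  rw [diff_eq]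
  have bound : ∀ x ∈ Set.uIoc (0:ℝ) (π/2),
      ‖Real.sin x * ((∑ μ ∈ Finset.range N, paf x μ) - ∑' μ, paf x μ) * f x‖
        ≤ 1 * r N * C := by
    intro x hx
    rw [Set.uIoc_of_le (by positivity)] at hx
    have hx0 : 0 ≤ x := hx.1.le
    have hx1 : x ≤ π / 2 := hx.2
    rw [Real.norm_eq_abs, abs_mul, abs_mul]
    apply mul_le_mul _ (by simpa [Real.norm_eq_abs] using hC x ⟨hx0, hx1⟩)
      (abs_nonneg _) (by simpa using hrnn N)
    have hsin1 : |Real.sin x| ≤ 1 := abs_le.mpr ⟨Real.neg_one_le_sin x, Real.sin_le_one x⟩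
    apply mul_le_mul hsin1 _ (abs_nonneg _) (by norm_num)
    rw [abs_sub_comm]
    exact tail_bound x hx0 hx1 N
  calc ‖∫ t in (0:ℝ)..(π/2), Real.sin t *
        ((∑ μ ∈ Finset.range N, paf t μ) - ∑' μ, paf t μ) * f t‖
      ≤ 1 * r N * C * |π/2 - 0| :=
        intervalIntegral.norm_integral_le_of_norm_le_const bound
    _ = C * r N * (π/2) := by
        rw [abs_of_nonneg (by rw [sub_zero]; positivity : (0:ℝ) ≤ π/2 - 0)]
        ring

lemma E_tendsto {f : ℝ → ℝ} (hf : Continuous f) :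
    Tendsto (fun N : ℕ => (-1:ℝ) ^ (N + 1) *
        ∫ t in (0:ℝ)..(π/2), Real.sin t / (t - ((N : ℝ) + 1) * π) * f t)
      atTop (nhds 0) := by
  have hπ := pi_pos
  obtain ⟨C, hC⟩ : ∃ C, ∀ x ∈ Set.Icc (0:ℝ) (π/2), ‖f x‖ ≤ C :=
    isCompact_Icc.exists_bound_of_continuousOn hf.continuousOn
  have hC0 : 0 ≤ C := le_trans (norm_nonneg _) (hC 0 (by constructor <;> [rfl; positivity]))
  rw [tendsto_zero_iff_norm_tendsto_zero]
  apply squeeze_zero (fun N => norm_nonneg _) _ (by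
    have h := tendsto_one_div_add_atTop_nhds_zero_nat.const_mul C
    rw [mul_zero] at h
    exact h)
  intro N
  set m : ℝ := (N : ℝ) + 1 with hm
  have hm1 : 1 ≤ m := by
    have : (0:ℝ) ≤ (N : ℝ) := Nat.cast_nonneg N
    rw [hm]; linarith
  have bound : ∀ x ∈ Set.uIoc (0:ℝ) (π/2),
      ‖Real.sin x / (x - m * π) * f x‖ ≤ 2 / (m * π) * C := by
    intro x hx
    rw [Set.uIoc_of_le (by positivity)] at hx
    have hx0 : 0 ≤ x := hx.1.le
    have hx1 : x ≤ π / 2 := hx.2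
    rw [Real.norm_eq_abs, abs_mul]
    apply mul_le_mul _ (by simpa [Real.norm_eq_abs] using hC x ⟨hx0, hx1⟩)
      (abs_nonneg _) (by positivity)
    rw [abs_div]
    have hden : |x - m * π| = m * π - x := by
      rw [abs_of_nonpos (by nlinarith)]; ring
    rw [hden]
    have h1 : |Real.sin x| ≤ 1 := abs_le.mpr ⟨Real.neg_one_le_sin x, Real.sin_le_one x⟩
    have h2 : m * π / 2 ≤ m * π - x := by nlinarith
    have h3 : (0:ℝ) < m * π / 2 := by positivity
    calc |Real.sin x| / (m * π - x) ≤ 1 / (m * π / 2) :=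
          div_le_div₀ (by norm_num) h1 h3 h2
      _ = 2 / (m * π) := by
          field_simp
  calc ‖(-1:ℝ) ^ (N + 1) * ∫ t in (0:ℝ)..(π/2), Real.sin t / (t - m * π) * f t‖
      = ‖∫ t in (0:ℝ)..(π/2), Real.sin t / (t - m * π) * f t‖ := by
        rw [norm_mul, norm_pow, norm_neg, norm_one, one_pow, one_mul]
    _ ≤ 2 / (m * π) * C * |π/2 - 0| :=
        intervalIntegral.norm_integral_le_of_norm_le_const bound
    _ = C * (1 / ((N : ℝ) + 1)) := by
        rw [abs_of_nonneg (by rw [sub_zero]; positivity : (0:ℝ) ≤ π/2 - 0), sub_zero, ← hm]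
        have hmne : m ≠ 0 := by positivity
        field_simp

lemma paf_def (t : ℝ) (μ : ℕ) :
    (-1 : ℝ) ^ (μ + 1) * (1 / (t + ((μ : ℝ) + 1) * π) + 1 / (t - ((μ : ℝ) + 1) * π))
      = paf t μ := rfl

/-- Key intermediate identity in the proof of Theorem 1: if `f` is continuous,
`π`-periodic and symmetric about `π/2` on `[0, ∞)`, and the improper integral
`I = ∫₀^∞ (sin x / x) f x dx` exists, then
`I = ∫₀^{π/2} sin t * (1/t + ∑_{μ=1}^∞ (-1)^μ (1/(t + μπ) + 1/(t - μπ))) f t dt`,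
the series converging for every `t ∈ (0, π/2]`. -/
theorem integral_eq_integral_partial_fractions (f : ℝ → ℝ) (hf : Continuous f)
    (hper : ∀ x : ℝ, 0 ≤ x → f (x + π) = f x)
    (hsym : ∀ x : ℝ, 0 ≤ x → f (π - x) = f x)
    (I : ℝ)
    (hI : Tendsto (fun T : ℝ => ∫ x in (0:ℝ)..T, Real.sin x / x * f x)
      atTop (nhds I)) :
    (∀ t ∈ Set.Ioc (0:ℝ) (π / 2),
      Summable (fun μ : ℕ =>
        (-1 : ℝ) ^ (μ + 1) * (1 / (t + ((μ : ℝ) + 1) * π) + 1 / (t - ((μ : ℝ) + 1) * π))))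
    ∧ I = ∫ t in (0:ℝ)..(π / 2),
        Real.sin t * (1 / t + ∑' μ : ℕ,
          (-1 : ℝ) ^ (μ + 1) * (1 / (t + ((μ : ℝ) + 1) * π) + 1 / (t - ((μ : ℝ) + 1) * π)))
          * f t := by
  have hπ := pi_pos
  constructor
  · intro t ht
    simp only [paf_def]
    exact paf_summable ht.1.le ht.2
  · simp only [paf_def]
    have iD := intg_main hf 0 (π/2)
    have iJ : IntervalIntegrable (fun t => Real.sin t * (∑' μ, paf t μ) * f t)
        volume 0 (π/2) := by
      apply ContinuousOn.intervalIntegrable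
      rw [Set.uIcc_of_le (by positivity)]
      exact (Real.continuous_sin.continuousOn.mul tsum_paf_continuousOn).mul
        hf.continuousOn
    have hRHS : (∫ t in (0:ℝ)..(π/2), Real.sin t * (1/t + ∑' μ, paf t μ) * f t)
        = (∫ t in (0:ℝ)..(π/2), Real.sin t / t * f t)
          + ∫ t in (0:ℝ)..(π/2), Real.sin t * (∑' μ, paf t μ) * f t := by
      rw [← intervalIntegral.integral_add iD iJ]
      apply intervalIntegral.integral_congr
      intro t _
      simp only []
      ring
    rw [hRHS]
    have hseq : Tendsto (fun N : ℕ => ((N : ℝ) + 1) * π) atTop atTop := by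
      apply Tendsto.atTop_mul_const hπ
      exact tendsto_atTop_add_const_right _ 1 tendsto_natCast_atTop_atTop
    have key1 : Tendsto (fun N : ℕ =>
        ∫ x in (0:ℝ)..(((N : ℝ) + 1) * π), Real.sin x / x * f x) atTop (nhds I) :=
      hI.comp hseq
    have key2 : Tendsto (fun N : ℕ =>
        ∫ x in (0:ℝ)..(((N : ℝ) + 1) * π), Real.sin x / x * f x) atTop
        (nhds (((∫ t in (0:ℝ)..(π/2), Real.sin t / t * f t)
          + ∫ t in (0:ℝ)..(π/2), Real.sin t * (∑' μ, paf t μ) * f t) + 0)) := by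
      have hD : Tendsto (fun _ : ℕ => (∫ t in (0:ℝ)..(π/2), Real.sin t / t * f t))
          atTop (nhds (∫ t in (0:ℝ)..(π/2), Real.sin t / t * f t)) := tendsto_const_nhds
      have h := (hD.add (Jsum_tendsto hf)).add (E_tendsto hf)
      apply h.congr
      intro N
      exact (FNpi_eq hf hper hsym N).symm
    rw [add_zero] at key2
    exact tendsto_nhds_unique key1 key2
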